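/- arXiv:2505.20017 — 3 statements merged into one kernel-verified Lean document; each statement's English description precedes it below -/
import Mathlib

section
/- Let p ≥ 1, B > 0, t ≥ 1. Let X_1,…,X_t ∈ ℝ^p satisfy ‖X_s‖₂ ≤ 1 and let Y_1,…,Y_t ∈ ℝ be arbitrary. Let Q₁ be the uniform probability measure on the closed Euclidean ball B(B+1) = {θ ∈ ℝ^p : ‖θ‖₂ ≤ B+1}. Then for every θ̄ ∈ ℝ^p with ‖θ̄‖₂ ≤ B, the quantity −log ∫ exp(−∑_{s=1}^t (ℓ_s(θ) − ℓ_s(θ̄))) dQ₁(θ) — which equals the regret Regret_t(θ̄) = ∑_{s=1}^t 𝓛_s(Q_s) − ∑_{s=1}^t ℓ_s(θ̄) of the exponential weighted average (EWA) forecaster with prior Q₁ — is at most (p/2)·log((B+1)²·e·max(p,t)/p). -/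
/- STATEMENT 0: Regret bound for the exponential weighted average (EWA) forecaster with
uniform prior on the Euclidean ball of radius `B+1`, for the squared loss
`ℓ s θ = ½(⟪θ, X s⟫ - Y s)²`.  The regret of the EWA forecaster against a comparator
`θ̄` in the ball of radius `B` equals
`-log ∫ exp(-∑_{s=1}^t (ℓ s θ - ℓ s θ̄)) dQ₁(θ)` and is bounded by
`(p/2)·log((B+1)²·e·max(p,t)/p)`. -/

open MeasureTheory Metric Finset
open scoped RealInnerProductSpace ENNReal

set_option maxHeartbeats 1000000

theorem ewa_uniform_prior_regret_bound
    (p t : ℕ) (hp : 1 ≤ p) (ht : 1 ≤ t) (B : ℝ) (hB : 0 < B)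
    (X : ℕ → EuclideanSpace ℝ (Fin p)) (hX : ∀ s ∈ Finset.Icc 1 t, ‖X s‖ ≤ 1)
    (Y : ℕ → ℝ)
    (ℓ : ℕ → EuclideanSpace ℝ (Fin p) → ℝ)
    (hℓ : ∀ s θ, ℓ s θ = (1/2) * (⟪θ, X s⟫ - Y s)^2)
    (Q₁ : Measure (EuclideanSpace ℝ (Fin p)))
    (hQ₁ : Q₁ = (volume (closedBall (0 : EuclideanSpace ℝ (Fin p)) (B+1)))⁻¹ •
        volume.restrict (closedBall (0 : EuclideanSpace ℝ (Fin p)) (B+1)))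
    (θbar : EuclideanSpace ℝ (Fin p)) (hθbar : ‖θbar‖ ≤ B) :
    -Real.log (∫ θ, Real.exp (-(∑ s ∈ Finset.Icc 1 t, (ℓ s θ - ℓ s θbar))) ∂Q₁)
      ≤ ((p : ℝ)/2) * Real.log ((B+1)^2 * Real.exp 1 * max (p : ℝ) (t : ℝ) / p) := by
  classical
  let E := EuclideanSpace ℝ (Fin p)
  have hp' : (1:ℝ) ≤ (p:ℝ) := by exact_mod_cast hp
  have ht' : (1:ℝ) ≤ (t:ℝ) := by exact_mod_cast ht
  set M : ℝ := max (p:ℝ) (t:ℝ) with hMdef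
  have hM0 : 0 < M := lt_of_lt_of_le (by linarith) (le_max_left _ _)
  have hpM : (p:ℝ) ≤ M := le_max_left _ _
  have htM : (t:ℝ) ≤ M := le_max_right _ _
  set δ : ℝ := Real.sqrt ((p:ℝ)/M) with hδdef
  have hδ0 : 0 < δ := Real.sqrt_pos.mpr (by positivity)
  have hδsq : δ^2 = (p:ℝ)/M := Real.sq_sqrt (by positivity)
  have hδ1 : δ ≤ 1 := by
    rw [show (1:ℝ) = Real.sqrt 1 from (Real.sqrt_one).symm]
    exact Real.sqrt_le_sqrt ((div_le_one hM0).mpr hpM)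
  -- the integrand
  set g : E → ℝ := fun θ => Real.exp (-(∑ s ∈ Finset.Icc 1 t, (ℓ s θ - ℓ s θbar))) with hg
  have hgeq : ∀ θ : E, g θ = Real.exp (-(∑ s ∈ Finset.Icc 1 t,
      ((1/2) * (⟪θ, X s⟫ - Y s)^2 - (1/2) * (⟪θbar, X s⟫ - Y s)^2))) := by
    intro θ; simp only [hg, hℓ]
  have hgc : Continuous g := by
    have h1 : Continuous fun θ : E => (∑ s ∈ Finset.Icc 1 t,
        ((1/2) * (⟪θ, X s⟫ - Y s)^2 - (1/2) * (⟪θbar, X s⟫ - Y s)^2)) := by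
      apply continuous_finset_sum
      intro s _
      exact (continuous_const.mul
        (((continuous_id.inner continuous_const).sub continuous_const).pow 2)).sub
        continuous_const
    have : Continuous fun θ : E => Real.exp (-(∑ s ∈ Finset.Icc 1 t,
        ((1/2) * (⟪θ, X s⟫ - Y s)^2 - (1/2) * (⟪θbar, X s⟫ - Y s)^2))) :=
      (h1.neg).rexp
    have hfe : g = fun θ : E => Real.exp (-(∑ s ∈ Finset.Icc 1 t,
        ((1/2) * (⟪θ, X s⟫ - Y s)^2 - (1/2) * (⟪θbar, X s⟫ - Y s)^2))) := funext hgeq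
    rw [hfe]; exact this
  have hg0 : ∀ θ : E, 0 ≤ g θ := fun θ => (Real.exp_pos _).le
  -- key pointwise inequality on the small ball
  have key : ∀ u : E, ‖u‖ ≤ δ →
      2 * Real.exp (-((p:ℝ)/2)) ≤ g (θbar + u) + g (θbar - u) := by
    intro u hu
    set q : ℝ := ∑ s ∈ Finset.Icc 1 t, (1/2) * (⟪u, X s⟫ : ℝ)^2 with hqdef
    set L : ℝ := ∑ s ∈ Finset.Icc 1 t, (⟪θbar, X s⟫ - Y s) * (⟪u, X s⟫ : ℝ) with hLdef
    have h1 : g (θbar + u) = Real.exp (-(q + L)) := by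
      rw [hgeq]
      congr 1
      rw [hqdef, hLdef, ← Finset.sum_add_distrib]
      congr 1
      apply Finset.sum_congr rfl
      intro s _
      rw [inner_add_left]
      ring
    have h2 : g (θbar - u) = Real.exp (-(q - L)) := by
      rw [hgeq]
      congr 1
      rw [hqdef, hLdef, ← Finset.sum_sub_distrib]
      congr 1
      apply Finset.sum_congr rfl
      intro s _
      rw [inner_sub_left]
      ring
    have hq : q ≤ (p:ℝ)/2 := by
      have hstep : q ≤ ∑ _s ∈ Finset.Icc 1 t, (1/2) * δ^2 := by
        apply Finset.sum_le_sum
        intro s hs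
        have habs : |(⟪u, X s⟫ : ℝ)| ≤ δ := by
          calc |(⟪u, X s⟫ : ℝ)| ≤ ‖u‖ * ‖X s‖ := abs_real_inner_le_norm u (X s)
            _ ≤ δ * 1 := mul_le_mul hu (hX s hs) (norm_nonneg _) hδ0.le
            _ = δ := mul_one δ
        have hsq : (⟪u, X s⟫ : ℝ)^2 ≤ δ^2 := by
          have := abs_le.mp habs
          nlinarith [this.1, this.2]
        linarith
      rw [Finset.sum_const, Nat.card_Icc] at hstep
      simp only [Nat.add_sub_cancel, nsmul_eq_mul] at hstep
      have hMp : M * δ^2 = (p:ℝ) := by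
        rw [hδsq]; field_simp
      nlinarith [sq_nonneg δ, htM, hMp, hstep]
    have hexpq : Real.exp (-((p:ℝ)/2)) ≤ Real.exp (-q) :=
      Real.exp_le_exp.mpr (by linarith)
    have hch : (2:ℝ) ≤ Real.exp (-L) + Real.exp L := by
      have a1 := Real.add_one_le_exp (-L)
      have a2 := Real.add_one_le_exp L
      linarith
    have e1 : Real.exp (-(q + L)) = Real.exp (-q) * Real.exp (-L) := by
      rw [← Real.exp_add]; ring_nf
    have e2 : Real.exp (-(q - L)) = Real.exp (-q) * Real.exp L := by
      rw [← Real.exp_add]; ring_nf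
    rw [h1, h2, e1, e2, ← mul_add]
    calc 2 * Real.exp (-((p:ℝ)/2)) ≤ 2 * Real.exp (-q) := by linarith
      _ ≤ Real.exp (-q) * (Real.exp (-L) + Real.exp L) := by nlinarith [Real.exp_pos (-q)]
  -- translation and reflection
  have htrans : ∫ θ in closedBall θbar δ, g θ = ∫ u in closedBall (0:E) δ, g (θbar + u) := by
    have := (measurePreserving_add_left (volume : Measure E) θbar).setIntegral_preimage_emb
      (MeasurableEquiv.addLeft θbar).measurableEmbedding g (closedBall θbar δ)
    rw [← this]
    congr 1
    ext u
    simp [dist_eq_norm]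
  have hneg : ∫ u in closedBall (0:E) δ, g (θbar + u) =
      ∫ u in closedBall (0:E) δ, g (θbar - u) := by
    have := (Measure.measurePreserving_neg (volume : Measure E)).setIntegral_preimage_emb
      (MeasurableEquiv.neg E).measurableEmbedding (fun u => g (θbar + u)) (closedBall (0:E) δ)
    have hset : (Neg.neg ⁻¹' closedBall (0:E) δ : Set E) = closedBall (0:E) δ := by
      ext u; simp
    rw [hset] at this
    rw [← this]
    apply setIntegral_congr_fun measurableSet_closedBall
    intro u _
    simp [sub_eq_add_neg]
  -- integrability on balls
  have hIbig : IntegrableOn g (closedBall (0:E) (B+1)) volume :=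
    hgc.continuousOn.integrableOn_compact (isCompact_closedBall _ _)
  have hIp : IntegrableOn (fun u : E => g (θbar + u)) (closedBall (0:E) δ) volume :=
    (hgc.comp (continuous_const.add continuous_id)).continuousOn.integrableOn_compact
      (isCompact_closedBall _ _)
  have hIm : IntegrableOn (fun u : E => g (θbar - u)) (closedBall (0:E) δ) volume :=
    (hgc.comp (continuous_const.sub continuous_id)).continuousOn.integrableOn_compact
      (isCompact_closedBall _ _)
  -- lower bound on the small-ball integral
  have hsmall : (volume (closedBall (0:E) δ)).toReal * Real.exp (-((p:ℝ)/2))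
      ≤ ∫ θ in closedBall θbar δ, g θ := by
    have h2I : 2 * ∫ θ in closedBall θbar δ, g θ =
        ∫ u in closedBall (0:E) δ, (g (θbar + u) + g (θbar - u)) := by
      rw [integral_add hIp hIm, htrans, hneg]
      ring
    have hmono : ∫ u in closedBall (0:E) δ, (2 * Real.exp (-((p:ℝ)/2)))
        ≤ ∫ u in closedBall (0:E) δ, (g (θbar + u) + g (θbar - u)) := by
      apply setIntegral_mono_on (integrableOn_const measure_closedBall_lt_top.ne)
        (hIp.add hIm) measurableSet_closedBall
      intro u hu
      exact key u (by simpa [dist_eq_norm] using (mem_closedBall.mp hu))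
    rw [setIntegral_const] at hmono
    rw [smul_eq_mul] at hmono
    rw [measureReal_def] at hmono
    linarith [h2I ▸ hmono]
  -- small ball is inside the big ball
  have hsub : closedBall θbar δ ⊆ closedBall (0:E) (B+1) := by
    apply closedBall_subset_closedBall'
    have : dist θbar 0 = ‖θbar‖ := by simp [dist_eq_norm]
    rw [this]
    linarith
  have hbig : ∫ θ in closedBall θbar δ, g θ ≤ ∫ θ in closedBall (0:E) (B+1), g θ :=
    setIntegral_mono_set hIbig (Filter.Eventually.of_forall fun θ => hg0 θ)
      (HasSubset.Subset.eventuallyLE hsub)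
  -- volumes
  set ν : ℝ≥0∞ := volume (closedBall (0:E) 1) with hνdef
  have hν0 : 0 < ν := measure_closedBall_pos volume (0:E) one_pos
  have hνtop : ν < ⊤ := measure_closedBall_lt_top
  have hνt : 0 < ν.toReal := ENNReal.toReal_pos hν0.ne' hνtop.ne
  have hvol : ∀ r : ℝ, 0 ≤ r → (volume (closedBall (0:E) r)).toReal = r^p * ν.toReal := by
    intro r hr
    rw [Measure.addHaar_closedBall' volume (0:E) hr, ENNReal.toReal_mul,
      ENNReal.toReal_ofReal (by positivity)]
    congr 2
    exact finrank_euclideanSpace_fin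
  have hvs : (volume (closedBall (0:E) δ)).toReal = δ^p * ν.toReal := hvol δ hδ0.le
  have hvb : (volume (closedBall (0:E) (B+1))).toReal = (B+1)^p * ν.toReal :=
    hvol (B+1) (by linarith)
  -- lower bound on the total integral
  set c : ℝ := (δ/(B+1))^p * Real.exp (-((p:ℝ)/2)) with hcdef
  have hc0 : 0 < c := by positivity
  have hQlb : c ≤ ∫ θ, g θ ∂Q₁ := by
    rw [hQ₁, integral_smul_measure, ENNReal.toReal_inv, smul_eq_mul]
    have hvbpos : 0 < (volume (closedBall (0:E) (B+1))).toReal := by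
      rw [hvb]; positivity
    have hchain : (volume (closedBall (0:E) δ)).toReal * Real.exp (-((p:ℝ)/2))
        ≤ ∫ θ in closedBall (0:E) (B+1), g θ := le_trans hsmall hbig
    have key2 : c * (volume (closedBall (0:E) (B+1))).toReal
        = (volume (closedBall (0:E) δ)).toReal * Real.exp (-((p:ℝ)/2)) := by
      rw [hcdef, hvs, hvb, div_pow]
      field_simp
    calc c = ((volume (closedBall (0:E) (B+1))).toReal)⁻¹ *
          (c * (volume (closedBall (0:E) (B+1))).toReal) := by
          field_simp
      _ = ((volume (closedBall (0:E) (B+1))).toReal)⁻¹ *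
          ((volume (closedBall (0:E) δ)).toReal * Real.exp (-((p:ℝ)/2))) := by rw [key2]
      _ ≤ ((volume (closedBall (0:E) (B+1))).toReal)⁻¹ *
          ∫ θ in closedBall (0:E) (B+1), g θ :=
          mul_le_mul_of_nonneg_left hchain (by positivity)
  -- conclude via log
  have hlog : -Real.log (∫ θ, g θ ∂Q₁) ≤ -Real.log c :=
    neg_le_neg (Real.log_le_log hc0 hQlb)
  have hlogc : -Real.log c = (p:ℝ) * Real.log ((B+1)/δ) + (p:ℝ)/2 := by
    rw [hcdef, Real.log_mul (by positivity) (Real.exp_ne_zero _), Real.log_exp,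
      Real.log_pow]
    have : Real.log (δ/(B+1)) = -Real.log ((B+1)/δ) := by
      rw [← Real.log_inv]
      congr 1
      field_simp
    rw [this]
    ring
  have hfinal : (p:ℝ) * Real.log ((B+1)/δ) + (p:ℝ)/2
      = ((p : ℝ)/2) * Real.log ((B+1)^2 * Real.exp 1 * M / (p:ℝ)) := by
    have harg : (B+1)^2 * Real.exp 1 * M / (p:ℝ) = ((B+1)/δ)^2 * Real.exp 1 := by
      rw [div_pow]
      rw [hδsq]
      field_simp
    rw [harg, Real.log_mul (by positivity) (Real.exp_ne_zero _), Real.log_exp,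
      Real.log_pow]
    push_cast
    ring
  calc -Real.log (∫ θ, g θ ∂Q₁) ≤ -Real.log c := hlog
    _ = (p:ℝ) * Real.log ((B+1)/δ) + (p:ℝ)/2 := hlogc
    _ = ((p : ℝ)/2) * Real.log ((B+1)^2 * Real.exp 1 * M / (p:ℝ)) := hfinal
end

section
/- Let p ≥ 1, B > 0, d ≥ 1, t ≥ 1. Let X_1,…,X_t ∈ ℝ^p satisfy ‖X_s‖₂ ≤ 1 and let Y_1,…,Y_t ∈ ℝ. Consider the blocked strategy consisting of d independent EWA forecasters, each with the uniform prior Q₁ on the closed Euclidean ball B(B+1): for s = i + (k−1)d with i ∈ {1,…,d} and k ≥ 1, the played distribution Q_s has density with respect to Q₁ proportional to exp(−∑_{j=1}^{k−1} ℓ_{i+(j−1)d}(θ)). Then for every θ̄ ∈ ℝ^p with ‖θ̄‖₂ ≤ B, the regret satisfies Regret_t(θ̄) = ∑_{s=1}^t 𝓛_s(Q_s) − ∑_{s=1}^t ℓ_s(θ̄) ≤ (dp/2)·log((B+1)²·e·max(dp, t+d)/(dp)). -/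
open MeasureTheory Metric Finset
open scoped RealInnerProductSpace ENNReal

lemma BEA.inner_integral_zero {p : ℕ} (ε : ℝ) (v : EuclideanSpace ℝ (Fin p)) :
    ∫ u in closedBall (0 : EuclideanSpace ℝ (Fin p)) ε, ⟪u, v⟫ ∂volume = 0 := by
  set S := closedBall (0 : EuclideanSpace ℝ (Fin p)) ε with hS
  set f : EuclideanSpace ℝ (Fin p) → ℝ := fun u => ⟪u, v⟫ with hf
  have hsym : ∀ u, S.indicator f (-u) = - S.indicator f u := by
    intro u
    by_cases hu : u ∈ S
    · have hnu : -u ∈ S := by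
        simp only [hS, mem_closedBall_zero_iff, norm_neg] at *
        exact hu
      rw [Set.indicator_of_mem hnu, Set.indicator_of_mem hu]
      simp [hf, inner_neg_left]
    · have hnu : -u ∉ S := by
        simp only [hS, mem_closedBall_zero_iff, norm_neg] at *
        exact hu
      rw [Set.indicator_of_notMem hnu, Set.indicator_of_notMem hu, neg_zero]
  have h1 : ∫ u in S, f u ∂volume = ∫ u, S.indicator f u ∂volume :=
    (integral_indicator measurableSet_closedBall).symm
  have h2 : ∫ u, S.indicator f (-u) ∂volume = ∫ u, S.indicator f u ∂volume :=
    integral_neg_eq_self _ _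
  have h3 : ∫ u, S.indicator f (-u) ∂volume = - ∫ u, S.indicator f u ∂volume := by
    simp_rw [hsym]
    exact integral_neg _
  rw [h1]
  linarith [h2.symm.trans h3]

lemma BEA.setIntegral_translate {p : ℕ} (ε : ℝ) (c : EuclideanSpace ℝ (Fin p))
    (g : EuclideanSpace ℝ (Fin p) → ℝ) :
    ∫ θ in closedBall c ε, g θ ∂volume
      = ∫ u in closedBall (0 : EuclideanSpace ℝ (Fin p)) ε, g (c + u) ∂volume := by
  have h2 : ∀ u, (closedBall c ε).indicator g (c + u)
      = (closedBall (0 : EuclideanSpace ℝ (Fin p)) ε).indicator (fun w => g (c + w)) u := by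
    intro u
    have hmem : c + u ∈ closedBall c ε ↔ u ∈ closedBall (0 : EuclideanSpace ℝ (Fin p)) ε := by
      simp [mem_closedBall, dist_eq_norm]
    by_cases hu : u ∈ closedBall (0 : EuclideanSpace ℝ (Fin p)) ε
    · rw [Set.indicator_of_mem (hmem.mpr hu), Set.indicator_of_mem hu]
    · rw [Set.indicator_of_notMem (fun h => hu (hmem.mp h)), Set.indicator_of_notMem hu]
  rw [← integral_indicator measurableSet_closedBall,
    ← integral_add_left_eq_self ((closedBall c ε).indicator g) c]
  simp_rw [h2]
  exact integral_indicator measurableSet_closedBall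

lemma BEA.exp_setIntegral_lower {p : ℕ} {ε m : ℝ} (F : EuclideanSpace ℝ (Fin p) → ℝ)
    (hF : Continuous F)
    (hm : ∫ u in closedBall (0 : EuclideanSpace ℝ (Fin p)) ε, F u ∂volume
      ≤ (volume (closedBall (0 : EuclideanSpace ℝ (Fin p)) ε)).toReal * m) :
    (volume (closedBall (0 : EuclideanSpace ℝ (Fin p)) ε)).toReal * Real.exp (-m)
      ≤ ∫ u in closedBall (0 : EuclideanSpace ℝ (Fin p)) ε, Real.exp (-F u) ∂volume := by
  set S := closedBall (0 : EuclideanSpace ℝ (Fin p)) ε with hS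
  have hcpt : IsCompact S := isCompact_closedBall _ _
  have hvolS : volume S < ⊤ := hcpt.measure_lt_top
  have hFi : IntegrableOn F S volume := hF.continuousOn.integrableOn_compact hcpt
  have hEi : IntegrableOn (fun u => Real.exp (-F u)) S volume :=
    ((Real.continuous_exp.comp hF.neg).continuousOn).integrableOn_compact hcpt
  have hCi : IntegrableOn (fun _ => (1 + m : ℝ)) S volume :=
    integrableOn_const hvolS.ne
  have hLi : IntegrableOn (fun u => Real.exp (-m) * ((1 + m) - F u)) S volume :=
    (hCi.sub hFi).const_mul _
  have hpt : ∀ u ∈ S, Real.exp (-m) * ((1 + m) - F u) ≤ Real.exp (-F u) := by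
    intro u _
    have h1 : (m - F u) + 1 ≤ Real.exp (m - F u) := Real.add_one_le_exp _
    have h2 : Real.exp (-m) * Real.exp (m - F u) = Real.exp (-F u) := by
      rw [← Real.exp_add]; ring_nf
    calc Real.exp (-m) * ((1 + m) - F u) = Real.exp (-m) * ((m - F u) + 1) := by ring
      _ ≤ Real.exp (-m) * Real.exp (m - F u) :=
          mul_le_mul_of_nonneg_left h1 (Real.exp_pos _).le
      _ = Real.exp (-F u) := h2
  have hmono : ∫ u in S, Real.exp (-m) * ((1 + m) - F u) ∂volume
      ≤ ∫ u in S, Real.exp (-F u) ∂volume :=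
    setIntegral_mono_on hLi hEi measurableSet_closedBall hpt
  have hcomp : ∫ u in S, Real.exp (-m) * ((1 + m) - F u) ∂volume
      = Real.exp (-m) * ((volume S).toReal * (1 + m) - ∫ u in S, F u ∂volume) := by
    rw [integral_const_mul, integral_sub hCi hFi, setIntegral_const]
    simp [smul_eq_mul, Measure.real]
  have h4 : (volume S).toReal * Real.exp (-m)
      ≤ ∫ u in S, Real.exp (-m) * ((1 + m) - F u) ∂volume := by
    rw [hcomp]
    have := Real.exp_pos (-m)
    nlinarith [hm]
  linarith

lemma BEA.block_bound {p : ℕ} {B ε : ℝ} (hB : 0 < B) (hε : 0 < ε) (hε1 : ε ≤ 1)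
    {K : ℕ} {r : ℕ → ℕ} {X : ℕ → EuclideanSpace ℝ (Fin p)}
    (hX : ∀ j ∈ Finset.range K, ‖X (r j)‖ ≤ 1) {Y : ℕ → ℝ}
    {θb : EuclideanSpace ℝ (Fin p)} (hθb : ‖θb‖ ≤ B)
    {F : EuclideanSpace ℝ (Fin p) → ℝ}
    (hFdef : F = fun θ => ∑ j ∈ Finset.range K, (1/2 : ℝ) * (⟪θ, X (r j)⟫ - Y (r j))^2) :
    -Real.log ((volume (closedBall (0 : EuclideanSpace ℝ (Fin p)) (B+1))).toReal⁻¹ *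
        ∫ θ in closedBall (0 : EuclideanSpace ℝ (Fin p)) (B+1), Real.exp (-F θ) ∂volume)
      ≤ F θb + (p : ℝ) * Real.log ((B+1)/ε) + (K : ℝ) * ε^2 / 2 := by
  have hB1 : (0:ℝ) < B + 1 := by linarith
  have hFcont : Continuous F := by
    rw [hFdef]
    apply continuous_finset_sum
    intro j _
    exact (continuous_const.mul
      (((continuous_id.inner continuous_const).sub continuous_const).pow 2))
  set Sε := closedBall (0 : EuclideanSpace ℝ (Fin p)) ε with hSε
  set SB := closedBall (0 : EuclideanSpace ℝ (Fin p)) (B+1) with hSB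
  have hcptε : IsCompact Sε := isCompact_closedBall _ _
  have hcptB : IsCompact SB := isCompact_closedBall _ _
  set w : EuclideanSpace ℝ (Fin p) :=
    ∑ j ∈ Finset.range K, (⟪θb, X (r j)⟫ - Y (r j)) • X (r j) with hw
  set H : EuclideanSpace ℝ (Fin p) → ℝ :=
    fun u => ∑ j ∈ Finset.range K, (1/2 : ℝ) * ⟪u, X (r j)⟫^2 with hH
  have hHcont : Continuous H := by
    apply continuous_finset_sum
    intro j _
    exact continuous_const.mul ((continuous_id.inner continuous_const).pow 2)
  have hexpand : ∀ u, F (θb + u) = F θb + ⟪u, w⟫ + H u := by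
    intro u
    simp only [hFdef, hH, hw, inner_sum, real_inner_smul_right]
    rw [← Finset.sum_add_distrib, ← Finset.sum_add_distrib]
    refine Finset.sum_congr rfl fun j _ => ?_
    rw [inner_add_left]
    ring
  have hFi : IntegrableOn (fun u => F (θb + u)) Sε volume :=
    (hFcont.comp (continuous_const.add continuous_id)).continuousOn.integrableOn_compact hcptε
  have hwi : IntegrableOn (fun u => ⟪u, w⟫) Sε volume :=
    (continuous_id.inner continuous_const).continuousOn.integrableOn_compact hcptε
  have hHi : IntegrableOn H Sε volume := hHcont.continuousOn.integrableOn_compact hcptε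
  have hC : IntegrableOn (fun _ : EuclideanSpace ℝ (Fin p) => F θb) Sε volume :=
    integrableOn_const hcptε.measure_lt_top.ne
  have hHbound : ∫ u in Sε, H u ∂volume ≤ (volume Sε).toReal * ((K : ℝ) * ε^2 / 2) := by
    have hpt : ∀ u ∈ Sε, H u ≤ (K : ℝ) * ε^2 / 2 := by
      intro u hu
      have hu' : ‖u‖ ≤ ε := by simpa [hSε, mem_closedBall_zero_iff] using hu
      calc H u ≤ ∑ j ∈ Finset.range K, (1/2 : ℝ) * ε^2 := by
            refine Finset.sum_le_sum fun j hj => ?_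
            have h1 : |⟪u, X (r j)⟫| ≤ ‖u‖ * ‖X (r j)‖ := abs_real_inner_le_norm _ _
            have h2 : ‖u‖ * ‖X (r j)‖ ≤ ε := by
              calc ‖u‖ * ‖X (r j)‖ ≤ ε * 1 :=
                    mul_le_mul hu' (hX j hj) (norm_nonneg _) hε.le
                _ = ε := mul_one ε
            have h3 : ⟪u, X (r j)⟫^2 ≤ ε^2 := by
              rw [← sq_abs]
              exact pow_le_pow_left₀ (abs_nonneg _) (h1.trans h2) 2
            linarith
        _ = (K : ℝ) * ε^2 / 2 := by
            rw [Finset.sum_const, Finset.card_range, nsmul_eq_mul]; ring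
    calc ∫ u in Sε, H u ∂volume ≤ ∫ _ in Sε, ((K : ℝ) * ε^2 / 2) ∂volume :=
          setIntegral_mono_on hHi (integrableOn_const hcptε.measure_lt_top.ne)
            measurableSet_closedBall hpt
      _ = (volume Sε).toReal * ((K : ℝ) * ε^2 / 2) := by
          rw [setIntegral_const]; simp [smul_eq_mul, Measure.real]
  have hmean : ∫ u in Sε, F (θb + u) ∂volume
      ≤ (volume Sε).toReal * (F θb + (K : ℝ) * ε^2 / 2) := by
    have heq : ∫ u in Sε, F (θb + u) ∂volume
        = (volume Sε).toReal * F θb + (∫ u in Sε, ⟪u, w⟫ ∂volume) + ∫ u in Sε, H u ∂volume := by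
      have hC' : IntegrableOn (fun u => F θb + ⟪u, w⟫) Sε volume := by
        exact hC.add hwi
      simp_rw [hexpand]
      rw [integral_add hC' hHi, integral_add hC hwi, setIntegral_const]
      simp [smul_eq_mul, Measure.real]
    rw [heq, BEA.inner_integral_zero, mul_add]
    linarith
  have hJ : (volume Sε).toReal * Real.exp (-(F θb + (K : ℝ) * ε^2 / 2))
      ≤ ∫ u in Sε, Real.exp (-(F (θb + u))) ∂volume :=
    BEA.exp_setIntegral_lower (fun u => F (θb + u))
      (hFcont.comp (continuous_const.add continuous_id)) hmean
  have htrans : ∫ θ in closedBall θb ε, Real.exp (-F θ) ∂volume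
      = ∫ u in Sε, Real.exp (-(F (θb + u))) ∂volume :=
    BEA.setIntegral_translate ε θb (fun θ => Real.exp (-F θ))
  have hsub : closedBall θb ε ⊆ SB := by
    apply closedBall_subset_closedBall'
    rw [dist_zero_right]
    linarith
  have hEiB : IntegrableOn (fun θ => Real.exp (-F θ)) SB volume :=
    (Real.continuous_exp.comp hFcont.neg).continuousOn.integrableOn_compact hcptB
  have hmono : ∫ θ in closedBall θb ε, Real.exp (-F θ) ∂volume
      ≤ ∫ θ in SB, Real.exp (-F θ) ∂volume :=
    setIntegral_mono_set hEiB (Filter.Eventually.of_forall fun θ => (Real.exp_pos _).le)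
      (HasSubset.Subset.eventuallyLE hsub)
  -- volumes
  set c1 := (volume (ball (0 : EuclideanSpace ℝ (Fin p)) 1)).toReal with hc1def
  have hc1 : 0 < c1 :=
    ENNReal.toReal_pos (measure_ball_pos volume _ one_pos).ne' measure_ball_lt_top.ne
  have hvεR : (volume Sε).toReal = ε^p * c1 := by
    rw [hSε, Measure.addHaar_closedBall _ _ hε.le, finrank_euclideanSpace_fin,
      ENNReal.toReal_mul, ENNReal.toReal_ofReal (pow_nonneg hε.le _)]
  have hvBR : (volume SB).toReal = (B+1)^p * c1 := by
    rw [hSB, Measure.addHaar_closedBall _ _ hB1.le, finrank_euclideanSpace_fin,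
      ENNReal.toReal_mul, ENNReal.toReal_ofReal (pow_nonneg hB1.le _)]
  have hεp : (0:ℝ) < ε^p * c1 := by positivity
  have hBp : (0:ℝ) < (B+1)^p * c1 := by positivity
  set m := F θb + (K : ℝ) * ε^2 / 2 with hm
  have h1 : (volume Sε).toReal * Real.exp (-m) ≤ ∫ θ in SB, Real.exp (-F θ) ∂volume := by
    calc (volume Sε).toReal * Real.exp (-m)
        ≤ ∫ u in Sε, Real.exp (-(F (θb + u))) ∂volume := hJ
      _ = ∫ θ in closedBall θb ε, Real.exp (-F θ) ∂volume := htrans.symm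
      _ ≤ _ := hmono
  have hkey : (ε/(B+1))^p * Real.exp (-m)
      ≤ (volume SB).toReal⁻¹ * ∫ θ in SB, Real.exp (-F θ) ∂volume := by
    have h2 : (ε/(B+1))^p * Real.exp (-m)
        = (volume SB).toReal⁻¹ * ((volume Sε).toReal * Real.exp (-m)) := by
      rw [hvεR, hvBR, div_pow]
      field_simp
    rw [h2]
    exact mul_le_mul_of_nonneg_left h1 (by positivity)
  have hpos : (0:ℝ) < (ε/(B+1))^p * Real.exp (-m) := by positivity
  have hlog := Real.log_le_log hpos hkey
  rw [Real.log_mul (by positivity) (Real.exp_ne_zero _), Real.log_exp, Real.log_pow] at hlog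
  have hlogflip : Real.log (ε/(B+1)) = - Real.log ((B+1)/ε) := by
    rw [← Real.log_inv, inv_div]
  rw [hlogflip] at hlog
  linarith

lemma BEA.telescope (d : ℕ) (f : ℕ → ℝ) (t : ℕ) :
    ∑ s ∈ Finset.Icc (t+1) (t+d), f s
      = (∑ s ∈ Finset.Icc 1 d, f s) + ∑ s ∈ Finset.Icc 1 t, (f (s+d) - f s) := by
  induction t with
  | zero => simp
  | succ n ih =>
    have e1 : ∑ s ∈ Finset.Icc (n+1+1) (n+1+d), f s = ∑ j ∈ Finset.range d, f (n+1+1+j) := by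
      rw [← Finset.Ico_add_one_right_eq_Icc, Finset.sum_Ico_eq_sum_range]
      apply Finset.sum_congr
      · congr 1; omega
      · intro j _; rfl
    have e2 : ∑ s ∈ Finset.Icc (n+1) (n+d), f s = ∑ j ∈ Finset.range d, f (n+1+j) := by
      rw [← Finset.Ico_add_one_right_eq_Icc, Finset.sum_Ico_eq_sum_range]
      apply Finset.sum_congr
      · congr 1; omega
      · intro j _; rfl
    have h := Finset.sum_range_sub (fun j => f (n+1+j)) d
    have h' : ∑ j ∈ Finset.range d, (f (n+1+1+j) - f (n+1+j)) = f (n+1+d) - f (n+1) := by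
      have heq : ∑ j ∈ Finset.range d, (f (n+1+1+j) - f (n+1+j))
          = ∑ j ∈ Finset.range d, (f (n+1+(j+1)) - f (n+1+j)) := by
        refine Finset.sum_congr rfl fun j _ => ?_
        congr 2
        omega
      rw [heq, h]
    have hsub : ∑ j ∈ Finset.range d, (f (n+1+1+j) - f (n+1+j))
        = (∑ j ∈ Finset.range d, f (n+1+1+j)) - ∑ j ∈ Finset.range d, f (n+1+j) :=
      Finset.sum_sub_distrib _ _
    have hR : ∑ s ∈ Finset.Icc 1 (n+1), (f (s+d) - f s)
        = (∑ s ∈ Finset.Icc 1 n, (f (s+d) - f s)) + (f (n+1+d) - f (n+1)) :=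
      Finset.sum_Icc_succ_top (by omega) _
    rw [e1, hR]
    rw [e2] at ih
    linarith

/- STATEMENT 3: Regret bound for the blocked strategy consisting of `d` independent EWA
forecasters with uniform prior `Q₁` on the Euclidean ball of radius `B+1`.  For
`s = i + (k-1)d` with `i ∈ {1,…,d}` (so `i - 1 = (s-1) % d` and `k - 1 = (s-1)/d`), the
played distribution `Q s` has density w.r.t. `Q₁` proportional to
`exp(-∑_{j=1}^{k-1} ℓ_{i+(j-1)d}(θ))`.  The regret
`∑_{s=1}^t 𝓛_s(Q_s) - ∑_{s=1}^t ℓ_s(θ̄)` with `𝓛_s(Q) = -log ∫ exp(-ℓ_s θ) dQ(θ)` is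
bounded by `(dp/2)·log((B+1)²·e·max(dp, t+d)/(dp))` for any `θ̄` with `‖θ̄‖₂ ≤ B`. -/

theorem blocked_ewa_regret_bound
    (p d t : ℕ) (hp : 1 ≤ p) (hd : 1 ≤ d) (ht : 1 ≤ t) (B : ℝ) (hB : 0 < B)
    (X : ℕ → EuclideanSpace ℝ (Fin p)) (hX : ∀ s ∈ Finset.Icc 1 t, ‖X s‖ ≤ 1)
    (Y : ℕ → ℝ)
    (ℓ : ℕ → EuclideanSpace ℝ (Fin p) → ℝ)
    (hℓ : ∀ s θ, ℓ s θ = (1/2) * (⟪θ, X s⟫ - Y s)^2)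
    (Q₁ : Measure (EuclideanSpace ℝ (Fin p)))
    (hQ₁ : Q₁ = (volume (closedBall (0 : EuclideanSpace ℝ (Fin p)) (B+1)))⁻¹ •
        volume.restrict (closedBall (0 : EuclideanSpace ℝ (Fin p)) (B+1)))
    -- the cumulative loss of the block containing round `s`, before round `s`
    (W : ℕ → EuclideanSpace ℝ (Fin p) → ℝ)
    (hW : ∀ s θ, W s θ = ∑ j ∈ Finset.range ((s-1)/d), ℓ ((s-1) % d + 1 + j*d) θ)
    -- normalising constants and the played distributions
    (Z : ℕ → ℝ) (hZ : ∀ s, Z s = ∫ θ, Real.exp (-(W s θ)) ∂Q₁)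
    (Q : ℕ → Measure (EuclideanSpace ℝ (Fin p)))
    (hQ : ∀ s, Q s = Q₁.withDensity (fun θ => ENNReal.ofReal (Real.exp (-(W s θ)) / Z s)))
    (θbar : EuclideanSpace ℝ (Fin p)) (hθbar : ‖θbar‖ ≤ B) :
    (∑ s ∈ Finset.Icc 1 t, -Real.log (∫ θ, Real.exp (-(ℓ s θ)) ∂(Q s)))
        - ∑ s ∈ Finset.Icc 1 t, ℓ s θbar
      ≤ ((d : ℝ) * p / 2) *
          Real.log ((B+1)^2 * Real.exp 1 * max ((d : ℝ) * p) ((t : ℝ) + d) / ((d : ℝ) * p)) := by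
  have hB1 : (0:ℝ) < B + 1 := by linarith
  set SB := closedBall (0 : EuclideanSpace ℝ (Fin p)) (B+1) with hSB
  have hSBne : volume SB ≠ 0 := (measure_closedBall_pos _ _ hB1).ne'
  have hSBtop : volume SB ≠ ⊤ := (isCompact_closedBall _ _).measure_lt_top.ne
  haveI hprob : IsProbabilityMeasure Q₁ := by
    constructor
    rw [hQ₁]
    simp only [Measure.smul_apply, Measure.restrict_apply MeasurableSet.univ,
      Set.univ_inter, smul_eq_mul]
    exact ENNReal.inv_mul_cancel hSBne hSBtop
  haveI : NeZero Q₁ := ⟨IsProbabilityMeasure.ne_zero Q₁⟩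
  -- continuity
  have hℓcont : ∀ r, Continuous (ℓ r) := by
    intro r
    have : ℓ r = fun θ => (1/2 : ℝ) * (⟪θ, X r⟫ - Y r)^2 := funext (hℓ r)
    rw [this]
    exact continuous_const.mul
      (((continuous_id.inner continuous_const).sub continuous_const).pow 2)
  have hWcont : ∀ s, Continuous (W s) := by
    intro s
    have : W s = fun θ => ∑ j ∈ Finset.range ((s-1)/d), ℓ ((s-1) % d + 1 + j*d) θ :=
      funext (hW s)
    rw [this]
    exact continuous_finset_sum _ fun j _ => hℓcont _
  -- integrability w.r.t. Q₁
  have hint : ∀ g : EuclideanSpace ℝ (Fin p) → ℝ, Continuous g → Integrable g Q₁ := by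
    intro g hg
    rw [hQ₁]
    exact (hg.continuousOn.integrableOn_compact (isCompact_closedBall _ _)).smul_measure
      (ENNReal.inv_ne_top.mpr hSBne)
  have hZpos : ∀ s, 0 < Z s := by
    intro s
    rw [hZ]
    exact integral_exp_pos (hint _ (Real.continuous_exp.comp (hWcont s).neg))
  -- the recursion for W
  have hWd : ∀ s, 1 ≤ s → ∀ θ, W (s+d) θ = W s θ + ℓ s θ := by
    intro s hs θ
    rw [hW, hW]
    have h1 : (s+d-1)/d = (s-1)/d + 1 := by
      have : s+d-1 = (s-1)+d := by omega
      rw [this, Nat.add_div_right _ hd]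
    have h2 : (s+d-1) % d = (s-1) % d := by
      have : s+d-1 = (s-1)+d := by omega
      rw [this, Nat.add_mod_right]
    rw [h1, h2, Finset.sum_range_succ]
    congr 1
    have h3 := Nat.div_add_mod (s-1) d
    have h4 : d * ((s-1)/d) = ((s-1)/d) * d := mul_comm _ _
    have h5 : (s-1) % d + 1 + ((s-1)/d)*d = s := by omega
    rw [h5]
  -- vanishing on the first block
  have hW0 : ∀ s ∈ Finset.Icc 1 d, ∀ θ, W s θ = 0 := by
    intro s hs θ
    simp only [Finset.mem_Icc] at hs
    rw [hW, Nat.div_eq_of_lt (by omega)]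
    simp
  have hZ1 : ∀ s ∈ Finset.Icc 1 d, Real.log (Z s) = 0 := by
    intro s hs
    have : Z s = 1 := by
      rw [hZ]
      have : (fun θ => Real.exp (-(W s θ))) = fun _ => (1:ℝ) := by
        funext θ; rw [hW0 s hs θ]; simp
      rw [this]
      simp
    rw [this, Real.log_one]
  -- per-round identity
  have hround : ∀ s ∈ Finset.Icc 1 t,
      -Real.log (∫ θ, Real.exp (-(ℓ s θ)) ∂(Q s)) = Real.log (Z s) - Real.log (Z (s+d)) := by
    intro s hs
    simp only [Finset.mem_Icc] at hs
    have hQs : ∫ θ, Real.exp (-(ℓ s θ)) ∂(Q s) = (Z s)⁻¹ * Z (s+d) := by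
      have hmeas : Measurable (fun θ => Real.toNNReal (Real.exp (-(W s θ)) / Z s)) :=
        (continuous_real_toNNReal.comp
          ((Real.continuous_exp.comp (hWcont s).neg).div_const _)).measurable
      have hQform : Q s = Q₁.withDensity
          (fun θ => ((Real.toNNReal (Real.exp (-(W s θ)) / Z s) : NNReal) : ℝ≥0∞)) := by
        rw [hQ]; rfl
      rw [hQform, integral_withDensity_eq_integral_smul hmeas]
      have hptw : ∀ θ, (Real.toNNReal (Real.exp (-(W s θ)) / Z s) : NNReal)
            • Real.exp (-(ℓ s θ))
          = (Z s)⁻¹ * Real.exp (-(W (s+d) θ)) := by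
        intro θ
        rw [NNReal.smul_def, Real.coe_toNNReal _
          (div_nonneg (Real.exp_pos _).le (hZpos s).le)]
        rw [hWd s hs.1 θ, neg_add, Real.exp_add]
        rw [smul_eq_mul]
        field_simp
      rw [integral_congr_ae (Filter.Eventually.of_forall hptw), integral_const_mul, ← hZ (s+d)]
    rw [hQs, Real.log_mul (inv_ne_zero (hZpos s).ne') (hZpos (s+d)).ne', Real.log_inv]
    ring
  -- telescoping
  have hsum1 : (∑ s ∈ Finset.Icc 1 t, -Real.log (∫ θ, Real.exp (-(ℓ s θ)) ∂(Q s)))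
      = ∑ s ∈ Finset.Icc (t+1) (t+d), -Real.log (Z s) := by
    rw [Finset.sum_congr rfl hround]
    have htel := BEA.telescope d (fun s => Real.log (Z s)) t
    have h0 : ∑ s ∈ Finset.Icc 1 d, Real.log (Z s) = 0 := Finset.sum_eq_zero hZ1
    have h1 : ∑ s ∈ Finset.Icc 1 t, (Real.log (Z s) - Real.log (Z (s+d)))
        = -∑ s ∈ Finset.Icc 1 t, (Real.log (Z (s+d)) - Real.log (Z s)) := by
      rw [← Finset.sum_neg_distrib]
      exact Finset.sum_congr rfl fun _ _ => by ring
    rw [h1]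
    rw [h0] at htel
    rw [Finset.sum_neg_distrib]
    linarith [htel]
  -- choice of ε and constants
  set M := max ((d:ℝ) * p) ((t:ℝ) + d) with hM
  have hd' : (0:ℝ) < (d:ℝ) := by exact_mod_cast hd
  have hp' : (0:ℝ) < (p:ℝ) := by exact_mod_cast hp
  have hdp : (0:ℝ) < (d:ℝ) * p := by positivity
  have hMpos : (0:ℝ) < M := lt_of_lt_of_le hdp (le_max_left _ _)
  set ε := Real.sqrt ((d:ℝ) * p / M) with hεdef
  have hεsq : ε^2 = (d:ℝ) * p / M := Real.sq_sqrt (by positivity)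
  have hεpos : 0 < ε := Real.sqrt_pos.mpr (by positivity)
  have hε1 : ε ≤ 1 := by
    rw [hεdef, show (1:ℝ) = Real.sqrt 1 from Real.sqrt_one.symm]
    apply Real.sqrt_le_sqrt
    rw [div_le_one hMpos]
    exact le_max_left _ _
  -- the per-block bound
  have hper : ∀ s ∈ Finset.Icc (t+1) (t+d),
      -Real.log (Z s) ≤ W s θbar + (p:ℝ) * Real.log ((B+1)/ε)
        + (((s-1)/d : ℕ) : ℝ) * ε^2 / 2 := by
    intro s hs
    simp only [Finset.mem_Icc] at hs
    have hZs : Z s = (volume SB).toReal⁻¹ * ∫ θ in SB, Real.exp (-(W s θ)) ∂volume := by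
      rw [hZ, hQ₁, integral_smul_measure, ENNReal.toReal_inv, smul_eq_mul]
    have hXblock : ∀ j ∈ Finset.range ((s-1)/d), ‖X ((s-1) % d + 1 + j*d)‖ ≤ 1 := by
      intro j hj
      simp only [Finset.mem_range] at hj
      apply hX
      simp only [Finset.mem_Icc]
      have h1 := Nat.div_add_mod (s-1) d
      have h2 : (j+1)*d ≤ ((s-1)/d)*d := Nat.mul_le_mul_right d hj
      have h3 : (j+1)*d = j*d + d := Nat.succ_mul j d
      have h4 : d * ((s-1)/d) = ((s-1)/d)*d := mul_comm _ _
      omega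
    have hWs : W s = fun θ => ∑ j ∈ Finset.range ((s-1)/d),
        (1/2 : ℝ) * (⟪θ, X ((s-1) % d + 1 + j*d)⟫ - Y ((s-1) % d + 1 + j*d))^2 := by
      funext θ
      rw [hW]
      exact Finset.sum_congr rfl fun j _ => hℓ _ θ
    have hbb := BEA.block_bound hB hεpos hε1 hXblock hθbar hWs
    rw [← hSB, ← hZs] at hbb
    exact hbb
  -- the three sums
  have hWsum : ∑ s ∈ Finset.Icc (t+1) (t+d), W s θbar = ∑ s ∈ Finset.Icc 1 t, ℓ s θbar := by
    have htel := BEA.telescope d (fun s => W s θbar) t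
    have h0 : ∑ s ∈ Finset.Icc 1 d, W s θbar = 0 :=
      Finset.sum_eq_zero fun s hs => hW0 s hs θbar
    have h1 : ∑ s ∈ Finset.Icc 1 t, (W (s+d) θbar - W s θbar)
        = ∑ s ∈ Finset.Icc 1 t, ℓ s θbar := by
      refine Finset.sum_congr rfl fun s hs => ?_
      simp only [Finset.mem_Icc] at hs
      rw [hWd s hs.1 θbar]
      ring
    linarith [htel, h1, h0]
  have hKsum : ∑ s ∈ Finset.Icc (t+1) (t+d), (((s-1)/d : ℕ) : ℝ) = (t : ℝ) := by
    have htel := BEA.telescope d (fun s => (((s-1)/d : ℕ) : ℝ)) t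
    have h0 : ∑ s ∈ Finset.Icc 1 d, (((s-1)/d : ℕ) : ℝ) = 0 := by
      refine Finset.sum_eq_zero fun s hs => ?_
      simp only [Finset.mem_Icc] at hs
      rw [Nat.div_eq_of_lt (by omega)]
      simp
    have h1 : ∑ s ∈ Finset.Icc 1 t, ((((s+d-1)/d : ℕ) : ℝ) - (((s-1)/d : ℕ) : ℝ))
        = (t : ℝ) := by
      have hc : ∀ s ∈ Finset.Icc 1 t, ((((s+d-1)/d : ℕ) : ℝ) - (((s-1)/d : ℕ) : ℝ)) = 1 := by
        intro s hs
        simp only [Finset.mem_Icc] at hs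
        have he : s+d-1 = (s-1)+d := by omega
        rw [he, Nat.add_div_right _ hd]
        push_cast
        ring
      rw [Finset.sum_congr rfl hc, Finset.sum_const, Nat.card_Icc, nsmul_eq_mul, mul_one]
      norm_num
    linarith [htel, h0, h1]
  have hcard : (Finset.Icc (t+1) (t+d)).card = d := by
    rw [Nat.card_Icc]
    omega
  have hmain : ∑ s ∈ Finset.Icc (t+1) (t+d), -Real.log (Z s)
      ≤ (∑ s ∈ Finset.Icc 1 t, ℓ s θbar) + (d:ℝ) * ((p:ℝ) * Real.log ((B+1)/ε))
        + (t:ℝ) * ε^2 / 2 := by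
    have hsle := Finset.sum_le_sum hper
    rw [Finset.sum_add_distrib, Finset.sum_add_distrib, Finset.sum_const, hcard,
      nsmul_eq_mul] at hsle
    have hK2 : ∑ s ∈ Finset.Icc (t+1) (t+d), (((s-1)/d : ℕ) : ℝ) * ε^2 / 2
        = (t:ℝ) * ε^2 / 2 := by
      calc ∑ s ∈ Finset.Icc (t+1) (t+d), (((s-1)/d : ℕ) : ℝ) * ε^2 / 2
          = (∑ s ∈ Finset.Icc (t+1) (t+d), (((s-1)/d : ℕ) : ℝ)) * ε^2 / 2 := by
            rw [← Finset.sum_div, ← Finset.sum_mul]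
        _ = (t:ℝ) * ε^2 / 2 := by rw [hKsum]
    rw [hWsum, hK2] at hsle
    linarith
  rw [hsum1]
  -- final arithmetic
  have hlogA : Real.log ((B+1)^2 * Real.exp 1 * M / ((d:ℝ)*p))
      = 2 * Real.log ((B+1)/ε) + 1 := by
    have h1 : (B+1)^2 * Real.exp 1 * M / ((d:ℝ)*p)
        = ((B+1)/ε)^2 * Real.exp 1 := by
      rw [div_pow, hεsq]
      field_simp
    rw [h1, Real.log_mul (by positivity) (Real.exp_ne_zero _), Real.log_exp, Real.log_pow]
    push_cast
    ring
  have htM : (t:ℝ) ≤ M := by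
    refine le_trans ?_ (le_max_right _ _)
    linarith
  have htε : (t:ℝ) * ε^2 ≤ (d:ℝ)*p := by
    rw [hεsq]
    calc (t:ℝ) * ((d:ℝ)*p/M) ≤ M * ((d:ℝ)*p/M) :=
          mul_le_mul_of_nonneg_right htM (by positivity)
      _ = (d:ℝ)*p := by field_simp
  rw [hlogA]
  have hexp : ((d:ℝ)*p/2) * (2*Real.log ((B+1)/ε) + 1)
      = (d:ℝ)*((p:ℝ)*Real.log ((B+1)/ε)) + (d:ℝ)*p/2 := by ring
  rw [hexp]
  linarith [hmain, htε]
end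

section
/- Let p ≥ 1, d ≥ 1, λ > 0, and let (X_t)_{t≥1} be vectors in ℝ^p with ‖X_t‖₂ ≤ 1 for all t. Let V_s = ∑_{r=1}^s X_r X_rᵀ + λ·Id. Then for all T ≥ d+1, ∑_{t=d+1}^T min(1, ‖X_t‖²_{V_{t−d}^{-1}}) ≤ 2dp·log(1 + T/(λdp)). -/
/- STATEMENT 12: Delayed elliptical potential lemma.  For vectors `X_t` with `‖X_t‖₂ ≤ 1`
and `V_s = ∑_{r=1}^s X_r X_rᵀ + λ·Id`, for all `T ≥ d+1`,
`∑_{t=d+1}^T min(1, ‖X_t‖²_{V_{t-d}⁻¹}) ≤ 2dp·log(1 + T/(λdp))`. -/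

open Matrix Finset

section DelayedEPLAux

variable {p : ℕ}

private lemma vmv_mulVec (x y : Fin p → ℝ) : (vecMulVec x x) *ᵥ y = (x ⬝ᵥ y) • x := by
  ext i
  simp [vecMulVec_apply, mulVec, dotProduct, Finset.mul_sum, mul_assoc, mul_comm, mul_left_comm]

private lemma vmv_psd (x : Fin p → ℝ) : (vecMulVec x x).PosSemidef := by
  refine Matrix.PosSemidef.of_dotProduct_mulVec_nonneg ?_ ?_
  · ext i j
    simp [conjTranspose_apply, vecMulVec_apply, mul_comm]
  · intro y
    rw [vmv_mulVec]
    simp only [star_trivial, dotProduct_smul, smul_eq_mul]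
    have : y ⬝ᵥ x = x ⬝ᵥ y := dotProduct_comm _ _
    rw [this]
    exact mul_self_nonneg _

private lemma smul_one_posDef {lam : ℝ} (hlam : 0 < lam) :
    (lam • (1 : Matrix (Fin p) (Fin p) ℝ)).PosDef := by
  have : lam • (1 : Matrix (Fin p) (Fin p) ℝ) = diagonal (fun _ => lam) := by
    ext i j
    by_cases h : i = j <;> simp [h, diagonal, Matrix.one_apply]
  rw [this]
  exact posDef_diagonal_iff.mpr fun _ => hlam

private lemma dot_symm {M : Matrix (Fin p) (Fin p) ℝ} (hM : Mᵀ = M) (u v : Fin p → ℝ) :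
    u ⬝ᵥ (M *ᵥ v) = (M *ᵥ u) ⬝ᵥ v := by
  rw [dotProduct_mulVec, ← mulVec_transpose, hM]

private lemma posdef_transpose_eq {M : Matrix (Fin p) (Fin p) ℝ} (hM : M.PosDef) : Mᵀ = M := by
  have := hM.isHermitian
  rwa [IsHermitian, conjTranspose_eq_transpose_of_trivial] at this

private lemma psd_quad_nonneg {M : Matrix (Fin p) (Fin p) ℝ} (hM : M.PosSemidef) (y : Fin p → ℝ) :
    0 ≤ y ⬝ᵥ (M *ᵥ y) := by simpa using hM.dotProduct_mulVec_nonneg y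

private lemma quad_inv_le {A B : Matrix (Fin p) (Fin p) ℝ} (hA : A.PosDef) (hB : B.PosDef)
    (hAB : (B - A).PosSemidef) (x : Fin p → ℝ) :
    x ⬝ᵥ (B⁻¹ *ᵥ x) ≤ x ⬝ᵥ (A⁻¹ *ᵥ x) := by
  have hAd : IsUnit A.det := isUnit_iff_ne_zero.mpr hA.det_pos.ne'
  have hBd : IsUnit B.det := isUnit_iff_ne_zero.mpr hB.det_pos.ne'
  set y := B⁻¹ *ᵥ x with hy
  set z := A⁻¹ *ᵥ x with hz
  have hBy : B *ᵥ y = x := by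
    rw [hy, mulVec_mulVec, Matrix.mul_nonsing_inv _ hBd, one_mulVec]
  have hAz : A *ᵥ z = x := by
    rw [hz, mulVec_mulVec, Matrix.mul_nonsing_inv _ hAd, one_mulVec]
  have hAs := posdef_transpose_eq hA
  have h1 : 0 ≤ y ⬝ᵥ (B *ᵥ y) - y ⬝ᵥ (A *ᵥ y) := by
    have := psd_quad_nonneg hAB y
    rwa [sub_mulVec, dotProduct_sub] at this
  have h2 : 0 ≤ (y - z) ⬝ᵥ (A *ᵥ (y - z)) := psd_quad_nonneg hA.posSemidef _
  have hexp : (y - z) ⬝ᵥ (A *ᵥ (y - z))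
      = y ⬝ᵥ (A *ᵥ y) - 2 * (y ⬝ᵥ x) + x ⬝ᵥ z := by
    rw [mulVec_sub, dotProduct_sub, sub_dotProduct, sub_dotProduct]
    have e1 : y ⬝ᵥ (A *ᵥ z) = y ⬝ᵥ x := by rw [hAz]
    have e2 : z ⬝ᵥ (A *ᵥ y) = x ⬝ᵥ y := by rw [dot_symm hAs, hAz]
    have e3 : z ⬝ᵥ (A *ᵥ z) = z ⬝ᵥ x := by rw [hAz]
    rw [e1, e2, e3, dotProduct_comm z x, dotProduct_comm x y]
    ring
  have hxy : x ⬝ᵥ y = y ⬝ᵥ (B *ᵥ y) := by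
    rw [hBy]; exact dotProduct_comm x y
  rw [hexp] at h2
  have hcomm : y ⬝ᵥ x = x ⬝ᵥ y := dotProduct_comm _ _
  rw [hcomm] at h2
  rw [hxy] at h2 ⊢
  linarith [hxy]

private lemma det_add_vmv {A : Matrix (Fin p) (Fin p) ℝ} (hA : IsUnit A.det) (hAs : Aᵀ = A)
    (x : Fin p → ℝ) :
    (A + vecMulVec x x).det = A.det * (1 + x ⬝ᵥ (A⁻¹ *ᵥ x)) := by
  have hit : (A⁻¹)ᵀ = A⁻¹ := by rw [Matrix.transpose_nonsing_inv, hAs]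
  have hinv : ∀ i j, A⁻¹ i j = A⁻¹ j i := fun i j => by
    rw [← hit, Matrix.transpose_apply, hit]
  rw [vecMulVec_eq Unit, det_add_replicateCol_mul_replicateRow hA]
  congr 1
  rw [det_unique]
  simp [Matrix.mul_apply, Matrix.replicateRow_apply, Matrix.replicateCol_apply, dotProduct, mulVec,
    Finset.mul_sum, Finset.sum_mul, mul_comm, mul_left_comm]
  exact Finset.sum_congr rfl fun i _ => Finset.sum_congr rfl fun j _ => by rw [hinv j i]

private lemma trace_eq_sum_eigs {A : Matrix (Fin p) (Fin p) ℝ} (hA : A.IsHermitian) :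
    A.trace = ∑ i, hA.eigenvalues i := by
  conv_lhs => rw [hA.spectral_theorem]
  rw [Unitary.conjStarAlgAut_apply, Matrix.trace_mul_cycle]
  have hU : (star (hA.eigenvectorUnitary : Matrix (Fin p) (Fin p) ℝ)) *
      (hA.eigenvectorUnitary : Matrix (Fin p) (Fin p) ℝ) = 1 :=
    Unitary.star_mul_self_of_mem hA.eigenvectorUnitary.2
  rw [hU, one_mul, trace_diagonal]
  simp

private lemma det_eq_prod_eigs {A : Matrix (Fin p) (Fin p) ℝ} (hA : A.IsHermitian) :
    A.det = ∏ i, hA.eigenvalues i := by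
  simpa using hA.det_eq_prod_eigenvalues

private lemma sum_vmv_psd (s : Finset ℕ) (f : ℕ → Fin p → ℝ) :
    (∑ r ∈ s, vecMulVec (f r) (f r)).PosSemidef := by
  classical
  induction s using Finset.induction_on with
  | empty => simpa using Matrix.PosSemidef.zero
  | insert _ _ hx ih =>
    rw [Finset.sum_insert hx]
    exact (vmv_psd _).add ih

private lemma sum_vmv_add_smul_posDef {lam : ℝ} (hlam : 0 < lam) (s : Finset ℕ)
    (f : ℕ → Fin p → ℝ) :
    ((∑ r ∈ s, vecMulVec (f r) (f r)) + lam • (1 : Matrix (Fin p) (Fin p) ℝ)).PosDef :=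
  Matrix.PosDef.posSemidef_add (sum_vmv_psd s f) (smul_one_posDef hlam)

private lemma det_le_trace_div_pow {A : Matrix (Fin p) (Fin p) ℝ} (hp : 1 ≤ p) (hA : A.PosDef) :
    A.det ≤ (A.trace / p) ^ p := by
  have hH := hA.isHermitian
  have hp' : (0:ℝ) < p := by exact_mod_cast hp
  rw [det_eq_prod_eigs hH, trace_eq_sum_eigs hH]
  have hev : ∀ i, 0 ≤ hH.eigenvalues i := hA.posSemidef.eigenvalues_nonneg
  have hw : ∑ _i : Fin p, (p:ℝ)⁻¹ = 1 := by
    simp [Finset.sum_const]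
    field_simp
  have hAM := Real.geom_mean_le_arith_mean_weighted Finset.univ (fun _ => (p:ℝ)⁻¹)
    hH.eigenvalues (fun _ _ => by positivity) hw (fun i _ => hev i)
  have hRHS : ∑ i, (p:ℝ)⁻¹ * hH.eigenvalues i = (∑ i, hH.eigenvalues i) / p := by
    rw [← Finset.mul_sum]; ring
  rw [hRHS] at hAM
  have key : ∏ i, hH.eigenvalues i = (∏ i, hH.eigenvalues i ^ ((p:ℝ)⁻¹)) ^ (p:ℕ) := by
    rw [← Finset.prod_pow]
    refine Finset.prod_congr rfl fun i _ => ?_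
    rw [← Real.rpow_natCast (hH.eigenvalues i ^ ((p:ℝ)⁻¹)) p, ← Real.rpow_mul (hev i)]
    rw [inv_mul_cancel₀ hp'.ne', Real.rpow_one]
  rw [key]
  have hbase : 0 ≤ ∏ i, hH.eigenvalues i ^ ((p:ℝ)⁻¹) :=
    Finset.prod_nonneg fun i _ => Real.rpow_nonneg (hev i) _
  exact pow_le_pow_left₀ hbase hAM p

private lemma block_bound {lam : ℝ} (hlam : 0 < lam) (hp : 1 ≤ p) (y : ℕ → Fin p → ℝ)
    (hy : ∀ k, (∑ i, (y k i)^2) ≤ 1) (n : ℕ) :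
    ∑ k ∈ range n, Real.log (1 + y k ⬝ᵥ
      ((((∑ l ∈ range k, vecMulVec (y l) (y l)) + lam • (1:Matrix (Fin p) (Fin p) ℝ))⁻¹) *ᵥ y k))
      ≤ p * Real.log (1 + n / (lam * p)) := by
  have hp' : (0:ℝ) < p := by exact_mod_cast hp
  set M : ℕ → Matrix (Fin p) (Fin p) ℝ :=
    fun k => (∑ l ∈ range k, vecMulVec (y l) (y l)) + lam • 1 with hM
  have hMpd : ∀ k, (M k).PosDef := fun k => sum_vmv_add_smul_posDef hlam _ _
  have hq0 : ∀ k, 0 ≤ y k ⬝ᵥ ((M k)⁻¹ *ᵥ y k) := fun k =>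
    psd_quad_nonneg ((hMpd k).inv.posSemidef) _
  have hstep : ∀ k, (M (k+1)).det = (M k).det * (1 + y k ⬝ᵥ ((M k)⁻¹ *ᵥ y k)) := by
    intro k
    have hMk : M (k+1) = M k + vecMulVec (y k) (y k) := by
      simp only [hM, Finset.sum_range_succ]
      rw [add_right_comm]
    rw [hMk, det_add_vmv (isUnit_iff_ne_zero.mpr (hMpd k).det_pos.ne')
      (posdef_transpose_eq (hMpd k))]
  have htel : ∑ k ∈ range n, Real.log (1 + y k ⬝ᵥ ((M k)⁻¹ *ᵥ y k))
      = Real.log ((M n).det) - Real.log ((M 0).det) := by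
    rw [← Finset.sum_range_sub (fun k => Real.log ((M k).det))]
    refine Finset.sum_congr rfl fun k _ => ?_
    rw [hstep k, Real.log_mul (hMpd k).det_pos.ne' (by nlinarith [hq0 k])]
    ring
  have hM0 : (M 0).det = lam ^ p := by
    simp only [hM, Finset.range_zero, Finset.sum_empty, zero_add]
    rw [Matrix.det_smul, Matrix.det_one]
    simp
  have htrv : ∀ l, (vecMulVec (y l) (y l)).trace = ∑ i, (y l i)^2 := by
    intro l
    simp [Matrix.trace, Matrix.diag, vecMulVec_apply, sq]
  have htr : (M n).trace ≤ lam * p + n := by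
    simp only [hM, Matrix.trace_add, Matrix.trace_sum, Matrix.trace_smul, Matrix.trace_one,
      smul_eq_mul, Fintype.card_fin]
    have h1 : ∑ l ∈ range n, (vecMulVec (y l) (y l)).trace ≤ n := by
      calc ∑ l ∈ range n, (vecMulVec (y l) (y l)).trace
          ≤ ∑ _l ∈ range n, (1:ℝ) := by
            refine Finset.sum_le_sum fun l _ => ?_
            rw [htrv l]; exact hy l
        _ = n := by simp
    linarith [h1]
  have hdet_le : (M n).det ≤ ((lam * p + n) / p) ^ p := by
    have htr0 : 0 ≤ (M n).trace := by
      rw [trace_eq_sum_eigs (hMpd n).isHermitian]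
      exact Finset.sum_nonneg fun i _ => (hMpd n).posSemidef.eigenvalues_nonneg i
    calc (M n).det ≤ ((M n).trace / p) ^ p := det_le_trace_div_pow hp (hMpd n)
      _ ≤ ((lam * p + n) / p) ^ p := by
          apply pow_le_pow_left₀ (by positivity)
          gcongr
  have hlog_le : Real.log ((M n).det) ≤ p * Real.log ((lam * p + n) / p) := by
    calc Real.log ((M n).det) ≤ Real.log (((lam * p + n) / p) ^ p) :=
          Real.log_le_log (hMpd n).det_pos hdet_le
      _ = p * Real.log ((lam * p + n) / p) := by rw [Real.log_pow]
  rw [htel, hM0, Real.log_pow]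
  have harg : (lam * p + n) / p / lam = 1 + n / (lam * p) := by
    rw [div_div]
    have : lam * ↑p + ↑n = (1 + ↑n / (lam * ↑p)) * (↑p * lam) := by
      field_simp
      try simp
    rw [this, mul_div_assoc]
    rw [mul_comm (↑p) lam, div_self (by positivity : lam * (p:ℝ) ≠ 0), mul_one]
  calc Real.log ((M n).det) - p * Real.log lam
      ≤ p * Real.log ((lam * p + n) / p) - p * Real.log lam := by linarith [hlog_le]
    _ = p * (Real.log ((lam * p + n) / p) - Real.log lam) := by ring
    _ = p * Real.log ((lam * p + n) / p / lam) := by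
        rw [Real.log_div (by positivity) hlam.ne']
    _ = p * Real.log (1 + n / (lam * p)) := by rw [harg]

private lemma amgm_log {d : ℕ} (hd : 1 ≤ d) (z : ℕ → ℝ) (hz : ∀ j ∈ range d, 1 ≤ z j) :
    ∑ j ∈ range d, Real.log (z j) ≤ d * Real.log ((∑ j ∈ range d, z j) / d) := by
  have hd' : (0:ℝ) < d := by exact_mod_cast hd
  have hw : ∑ _j ∈ range d, (d:ℝ)⁻¹ = 1 := by
    simp [Finset.sum_const, card_range]
    field_simp
  have hzpos : ∀ j ∈ range d, (0:ℝ) < z j := fun j hj => lt_of_lt_of_le one_pos (hz j hj)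
  have hAM := Real.geom_mean_le_arith_mean_weighted (range d) (fun _ => (d:ℝ)⁻¹) z
    (fun i _ => by positivity) hw (fun i hi => (hzpos i hi).le)
  have hppos : 0 < ∏ j ∈ range d, z j ^ ((d:ℝ)⁻¹) :=
    Finset.prod_pos fun j hj => Real.rpow_pos_of_pos (hzpos j hj) _
  have hlog := Real.log_le_log hppos hAM
  rw [Real.log_prod (fun j hj => (Real.rpow_pos_of_pos (hzpos j hj) _).ne')] at hlog
  have hlog' : ∑ j ∈ range d, (d:ℝ)⁻¹ * Real.log (z j)
      ≤ Real.log ((∑ j ∈ range d, z j) / d) := by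
    have e1 : ∑ j ∈ range d, Real.log (z j ^ ((d:ℝ)⁻¹)) =
        ∑ j ∈ range d, (d:ℝ)⁻¹ * Real.log (z j) :=
      Finset.sum_congr rfl fun j hj => by rw [Real.log_rpow (hzpos j hj)]
    have e2 : ∑ j ∈ range d, (d:ℝ)⁻¹ * z j = (∑ j ∈ range d, z j) / d := by
      rw [← Finset.mul_sum]; ring
    rw [e1, e2] at hlog
    exact hlog
  rw [← Finset.mul_sum] at hlog'
  calc ∑ j ∈ range d, Real.log (z j)
      = d * ((d:ℝ)⁻¹ * ∑ j ∈ range d, Real.log (z j)) := by field_simp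
    _ ≤ d * Real.log ((∑ j ∈ range d, z j) / d) :=
        mul_le_mul_of_nonneg_left hlog' hd'.le

private lemma min_le_two_log {u : ℝ} (hu : 0 ≤ u) : min 1 u ≤ 2 * Real.log (1 + u) := by
  have h1u : (0:ℝ) < 1 + u := by linarith
  have hlb : 1 - (1 + u)⁻¹ ≤ Real.log (1 + u) := by
    have h := Real.log_le_sub_one_of_pos (inv_pos.mpr h1u)
    rw [Real.log_inv] at h
    linarith
  have hinv : (1 + u) * (1 + u)⁻¹ = 1 := mul_inv_cancel₀ h1u.ne'
  rcases le_or_gt u 1 with h | h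
  · rw [min_eq_right h]
    nlinarith [hlb, hinv, inv_pos.mpr h1u]
  · rw [min_eq_left h.le]
    have h2 : (1 + u)⁻¹ ≤ 1/2 := by
      rw [inv_le_comm₀ h1u (by norm_num)]
      linarith
    linarith

private lemma block_iff {d N j k : ℕ} (hd : 1 ≤ d) (hj : j < d) :
    k < (N + d - 1 - j) / d ↔ j + k * d < N := by
  rw [Nat.lt_iff_add_one_le, Nat.le_div_iff_mul_le (by omega : 0 < d)]
  have hkd : (k + 1) * d = k * d + d := by ring
  omega

private lemma reindex {d : ℕ} (hd : 1 ≤ d) (N : ℕ) (F : ℕ → ℝ) :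
    ∑ m ∈ range N, F m =
    ∑ j ∈ range d, ∑ k ∈ range ((N + d - 1 - j) / d), F (j + k * d) := by
  rw [← Finset.sum_sigma (range d) (fun j => range ((N + d - 1 - j) / d))
    (fun q => F (q.1 + q.2 * d))]
  refine Finset.sum_nbij' (i := fun m => (⟨m % d, m / d⟩ : Σ _ : ℕ, ℕ))
    (j := fun q => q.1 + q.2 * d) ?_ ?_ ?_ ?_ ?_
  · intro m hm
    rw [Finset.mem_range] at hm
    refine Finset.mem_sigma.mpr ⟨Finset.mem_range.mpr (Nat.mod_lt _ (by omega)), ?_⟩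
    rw [Finset.mem_range, block_iff hd (Nat.mod_lt _ (by omega))]
    rw [Nat.mod_add_div']
    exact hm
  · intro q hq
    rw [Finset.mem_sigma, Finset.mem_range, Finset.mem_range] at hq
    rw [Finset.mem_range, ← block_iff hd hq.1]
    exact hq.2
  · intro m _
    simp only
    exact Nat.mod_add_div' m d
  · intro q hq
    rw [Finset.mem_sigma, Finset.mem_range, Finset.mem_range] at hq
    have h1 : (q.1 + q.2 * d) % d = q.1 := by
      rw [Nat.add_mul_mod_self_right, Nat.mod_eq_of_lt hq.1]
    have h2 : (q.1 + q.2 * d) / d = q.2 := by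
      rw [Nat.add_mul_div_right _ _ (by omega : 0 < d), Nat.div_eq_of_lt hq.1, zero_add]
    ext <;> simp [h1, h2]
  · intro m _
    simp only
    rw [Nat.mod_add_div']

end DelayedEPLAux

theorem delayed_elliptical_potential
    (p d : ℕ) (hp : 1 ≤ p) (hd : 1 ≤ d)
    (lam : ℝ) (hlam : 0 < lam)
    (X : ℕ → Fin p → ℝ) (hX : ∀ t, 1 ≤ t → Real.sqrt (∑ i, X t i ^ 2) ≤ 1)
    (V : ℕ → Matrix (Fin p) (Fin p) ℝ)
    (hV : ∀ s, V s = (∑ r ∈ Finset.Icc 1 s, Matrix.vecMulVec (X r) (X r))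
        + lam • (1 : Matrix (Fin p) (Fin p) ℝ))
    (T : ℕ) (hT : d + 1 ≤ T) :
    ∑ t ∈ Finset.Icc (d+1) T, min 1 (X t ⬝ᵥ (V (t - d))⁻¹.mulVec (X t))
      ≤ 2 * d * p * Real.log (1 + T / (lam * d * p)) := by
  classical
  have hp' : (0:ℝ) < p := by exact_mod_cast hp
  have hd' : (0:ℝ) < d := by exact_mod_cast hd
  set N := T - d with hN
  have hN1 : 1 ≤ N := by omega
  set n : ℕ → ℕ := fun j => (N + d - 1 - j) / d with hn
  set G : ℕ → ℝ := fun m => min 1 (X (d+1+m) ⬝ᵥ (V (d+1+m - d))⁻¹ *ᵥ X (d+1+m)) with hG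
  -- squared norms are ≤ 1
  have hX2 : ∀ t, 1 ≤ t → (∑ i, X t i ^ 2) ≤ 1 := by
    intro t ht
    have h0 : 0 ≤ ∑ i, X t i ^ 2 := Finset.sum_nonneg fun i _ => sq_nonneg _
    have := hX t ht
    calc ∑ i, X t i ^ 2 = Real.sqrt (∑ i, X t i ^ 2) ^ 2 := (Real.sq_sqrt h0).symm
      _ ≤ 1 ^ 2 := by
          apply pow_le_pow_left₀ (Real.sqrt_nonneg _) this
      _ = 1 := one_pow 2
  -- step 1 : reindex Icc to range
  have h1 : ∑ t ∈ Finset.Icc (d+1) T, min 1 (X t ⬝ᵥ (V (t - d))⁻¹.mulVec (X t))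
      = ∑ m ∈ range N, G m := by
    rw [← Finset.Ico_add_one_right_eq_Icc, Finset.sum_Ico_eq_sum_range]
    have hTN : T + 1 - (d + 1) = N := by omega
    rw [hTN]
  rw [h1, reindex hd N G]
  -- per-block bound
  have hblock : ∀ j ∈ range d,
      ∑ k ∈ range (n j), G (j + k * d)
        ≤ 2 * (p * Real.log (1 + (n j) / (lam * p))) := by
    intro j hj
    rw [Finset.mem_range] at hj
    set y : ℕ → Fin p → ℝ := fun l => X (d+1+j+l*d) with hy
    have hy1 : ∀ k, (∑ i, (y k i)^2) ≤ 1 := fun k => hX2 _ (by omega)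
    have hkey : ∀ k ∈ range (n j), G (j + k * d) ≤ 2 * Real.log (1 + y k ⬝ᵥ
        ((((∑ l ∈ range k, vecMulVec (y l) (y l))
          + lam • (1:Matrix (Fin p) (Fin p) ℝ))⁻¹) *ᵥ y k)) := by
      intro k hk
      set Mk : Matrix (Fin p) (Fin p) ℝ :=
        (∑ l ∈ range k, vecMulVec (y l) (y l)) + lam • 1 with hMk
      have hMkpd : Mk.PosDef := sum_vmv_add_smul_posDef hlam _ _
      have ht1 : d+1+(j+k*d) = d+1+j+k*d := by omega
      have ht2 : d+1+j+k*d - d = 1+j+k*d := by omega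
      have hVpd : (V (1+j+k*d)).PosDef := by
        rw [hV]
        exact sum_vmv_add_smul_posDef hlam _ _
      -- the difference is PSD
      have hdiff : (V (1+j+k*d) - Mk).PosSemidef := by
        set s₀ : Finset ℕ := (range k).image (fun l => d+1+j+l*d) with hs₀
        have hsub : s₀ ⊆ Finset.Icc 1 (1+j+k*d) := by
          intro a ha
          rw [hs₀, Finset.mem_image] at ha
          obtain ⟨l, hl, rfl⟩ := ha
          rw [Finset.mem_range] at hl
          have hmul : (l+1)*d ≤ k*d := Nat.mul_le_mul_right d (by omega)
          have hld : (l+1)*d = l*d + d := by ring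
          rw [Finset.mem_Icc]
          omega
        have himg : ∑ r ∈ s₀, vecMulVec (X r) (X r)
            = ∑ l ∈ range k, vecMulVec (y l) (y l) := by
          rw [hs₀]
          rw [Finset.sum_image]
          intro a _ b _ hab
          have : a * d = b * d := by simp only at hab; omega
          exact Nat.eq_of_mul_eq_mul_right (by omega) this
        have hsplit : V (1+j+k*d) - Mk
            = ∑ r ∈ (Finset.Icc 1 (1+j+k*d)) \ s₀, vecMulVec (X r) (X r) := by
          rw [hV, hMk, ← himg]
          have := Finset.sum_sdiff (f := fun r => vecMulVec (X r) (X r)) hsub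
          rw [← this]
          abel
        rw [hsplit]
        exact sum_vmv_psd _ _
      have hq0 : 0 ≤ X (d+1+(j+k*d)) ⬝ᵥ ((V (d+1+(j+k*d) - d))⁻¹ *ᵥ X (d+1+(j+k*d))) := by
        rw [ht1, ht2]
        exact psd_quad_nonneg hVpd.inv.posSemidef _
      have hmon : X (d+1+(j+k*d)) ⬝ᵥ ((V (d+1+(j+k*d) - d))⁻¹ *ᵥ X (d+1+(j+k*d)))
          ≤ y k ⬝ᵥ (Mk⁻¹ *ᵥ y k) := by
        rw [ht1, ht2]
        exact quad_inv_le hMkpd hVpd hdiff (X (d+1+j+k*d))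
      have hq0' : 0 ≤ y k ⬝ᵥ (Mk⁻¹ *ᵥ y k) :=
        psd_quad_nonneg hMkpd.inv.posSemidef _
      calc G (j + k * d)
          ≤ 2 * Real.log (1 + X (d+1+(j+k*d)) ⬝ᵥ
              ((V (d+1+(j+k*d) - d))⁻¹ *ᵥ X (d+1+(j+k*d)))) := min_le_two_log hq0
        _ ≤ 2 * Real.log (1 + y k ⬝ᵥ (Mk⁻¹ *ᵥ y k)) := by
            have harg : (0:ℝ) < 1 + X (d+1+(j+k*d)) ⬝ᵥ
                ((V (d+1+(j+k*d) - d))⁻¹ *ᵥ X (d+1+(j+k*d))) := by linarith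
            have := Real.log_le_log harg (add_le_add_right hmon 1)
            linarith
    calc ∑ k ∈ range (n j), G (j + k * d)
        ≤ ∑ k ∈ range (n j), 2 * Real.log (1 + y k ⬝ᵥ
            ((((∑ l ∈ range k, vecMulVec (y l) (y l))
              + lam • (1:Matrix (Fin p) (Fin p) ℝ))⁻¹) *ᵥ y k)) :=
          Finset.sum_le_sum hkey
      _ = 2 * ∑ k ∈ range (n j), Real.log (1 + y k ⬝ᵥ
            ((((∑ l ∈ range k, vecMulVec (y l) (y l))
              + lam • (1:Matrix (Fin p) (Fin p) ℝ))⁻¹) *ᵥ y k)) := by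
          rw [Finset.mul_sum]
      _ ≤ 2 * (p * Real.log (1 + (n j) / (lam * p))) := by
          have := block_bound hlam hp y hy1 (n j)
          linarith
  -- combine the blocks
  have hsum_n : (∑ j ∈ range d, ((n j : ℝ))) = N := by
    have := reindex hd N (fun _ => (1:ℝ))
    simp at this
    rw [← this]
  calc ∑ j ∈ range d, ∑ k ∈ range (n j), G (j + k * d)
      ≤ ∑ j ∈ range d, 2 * (p * Real.log (1 + (n j) / (lam * p))) :=
        Finset.sum_le_sum hblock
    _ = 2 * p * ∑ j ∈ range d, Real.log (1 + (n j) / (lam * p)) := by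
        rw [Finset.mul_sum]
        exact Finset.sum_congr rfl fun j _ => by ring
    _ ≤ 2 * p * (d * Real.log ((∑ j ∈ range d, (1 + (n j) / (lam * p))) / d)) := by
        have hz : ∀ j ∈ range d, 1 ≤ 1 + ((n j : ℝ)) / (lam * p) := by
          intro j _
          have : (0:ℝ) ≤ (n j : ℝ) / (lam * p) := by positivity
          linarith
        have := amgm_log hd (fun j => 1 + (n j : ℝ) / (lam * p)) hz
        have h2p : (0:ℝ) ≤ 2 * p := by positivity
        exact mul_le_mul_of_nonneg_left this h2p
    _ ≤ 2 * d * p * Real.log (1 + T / (lam * d * p)) := by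
        have hsz : (∑ j ∈ range d, (1 + (n j : ℝ) / (lam * p))) / d
            = 1 + N / (lam * p * d) := by
          rw [Finset.sum_add_distrib]
          rw [Finset.sum_const, card_range]
          rw [← Finset.sum_div, hsum_n]
          field_simp
          ring
        rw [hsz]
        have hNT : (N:ℝ) ≤ T := by
          have : N ≤ T := by omega
          exact_mod_cast this
        have harg1 : (0:ℝ) < 1 + N / (lam * p * d) := by positivity
        have hargle : 1 + (N:ℝ) / (lam * p * d) ≤ 1 + T / (lam * d * p) := by
          have e : lam * p * d = lam * d * p := by ring
          rw [e]
          have : (N:ℝ) / (lam * d * p) ≤ T / (lam * d * p) := by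
            apply div_le_div_of_nonneg_right hNT (by positivity)
          linarith
        have := Real.log_le_log harg1 hargle
        calc 2 * p * (d * Real.log (1 + N / (lam * p * d)))
            ≤ 2 * p * (d * Real.log (1 + T / (lam * d * p))) := by
              apply mul_le_mul_of_nonneg_left _ (by positivity : (0:ℝ) ≤ 2 * p)
              exact mul_le_mul_of_nonneg_left this hd'.le
          _ = 2 * d * p * Real.log (1 + T / (lam * d * p)) := by ring
end
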